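/- Fix ν > 0, M > 0, γ₀, γ₁ ∈ (0,1), γ₂ ∈ (0,1), t ≥ 0, and let b = b(t,·) be the shear flow at time t. Let k ≠ 0 be a real number and let φ : ℝ → ℝ be a twice continuously differentiable function with φ, φ' ∈ L²(ℝ), φ(y) → 0 as y → ±∞, solving φ''(y) − q(y)·φ(y) = k²·φ(y) for all y ∈ ℝ, where q(y) = b''(y)/b(y) for y ≠ 0 and q(0) is the continuous extension of b''/b at y = 0. If φ(y₀) = 0 for some y₀ ∈ ℝ, then φ ≡ 0 on ℝ. In particular, any nonzero such solution (a neutral mode) has no zeros. -/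

import Mathlib

open MeasureTheory Real Filter Set

noncomputable section

/-- The shear flow `b(t,y)` from the paper (eq. (1.6)/(2.1)):
`b(t,y) = y + M·(∫₀^y (γ₀²/√(4νt+γ₀²))·exp(−z²/(4νt+γ₀²)) dz
  − γ₂·∫₀^y (γ₀²γ₁³/√(4νt+γ₀²γ₁²))·exp(−z²/(4νt+γ₀²γ₁²)) dz)`. -/
def shearFlow (ν M γ₀ γ₁ γ₂ : ℝ) (t y : ℝ) : ℝ :=
  y + M * ((∫ z in (0:ℝ)..y, γ₀^2 / Real.sqrt (4*ν*t + γ₀^2) * Real.exp (-z^2 / (4*ν*t + γ₀^2)))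
    - γ₂ * ∫ z in (0:ℝ)..y, γ₀^2 * γ₁^3 / Real.sqrt (4*ν*t + γ₀^2*γ₁^2) *
        Real.exp (-z^2 / (4*ν*t + γ₀^2*γ₁^2)))

/-- The potential `q = b''/b`, extended continuously at `y = 0`
(where `b(0) = b''(0) = 0`). -/
def qExt (b : ℝ → ℝ) : ℝ → ℝ := fun y =>
  if y = 0 then limUnder (nhdsWithin 0 {(0:ℝ)}ᶜ) (fun z => deriv (deriv b) z / b z)
  else deriv (deriv b) y / b y

/-- The set of Rayleigh quotients `∫|φ'|² + ∫ (b''/b)·φ²` over normalized `φ ∈ H¹(ℝ)`. -/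
def lambdaSet (b : ℝ → ℝ) : Set ℝ :=
  { E | ∃ φ : ℝ → ℝ, Differentiable ℝ φ ∧ MemLp φ 2 (volume : Measure ℝ) ∧
      MemLp (deriv φ) 2 (volume : Measure ℝ) ∧ (∫ y : ℝ, (φ y)^2) = 1 ∧
      E = (∫ y : ℝ, (deriv φ y)^2) + ∫ y : ℝ, qExt b y * (φ y)^2 }

/-- `λ(M,t)`: the infimum of the Rayleigh quotient for the shear flow. -/
def lambdaVal (ν M γ₀ γ₁ γ₂ t : ℝ) : ℝ := sInf (lambdaSet (shearFlow ν M γ₀ γ₁ γ₂ t))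

/-- `c` is an eigenvalue of the Rayleigh operator `R_{b,k} = b·Id − b''·(∂_y² − k²)⁻¹`:
there are `ω ∈ L²(ℝ,ℂ)`, `ω ≠ 0`, and a `C²` stream function `ψ` with
`ψ, ψ', ψ'' ∈ L²`, such that `ψ'' − k²ψ = ω` everywhere and
`(b − c)·ω = b''·ψ` almost everywhere. -/
def IsRayleighEigenvalue (b : ℝ → ℝ) (k : ℝ) (c : ℂ) : Prop :=
  ∃ ω ψ : ℝ → ℂ,
    MemLp ω 2 (volume : Measure ℝ) ∧ ¬ (ω =ᵐ[(volume : Measure ℝ)] (0 : ℝ → ℂ)) ∧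
    ContDiff ℝ 2 ψ ∧ MemLp ψ 2 (volume : Measure ℝ) ∧
    MemLp (deriv ψ) 2 (volume : Measure ℝ) ∧ MemLp (deriv (deriv ψ)) 2 (volume : Measure ℝ) ∧
    (∀ y : ℝ, deriv (deriv ψ) y - (k:ℂ)^2 * ψ y = ω y) ∧
    (∀ᵐ y : ℝ ∂(volume : Measure ℝ),
      ((b y : ℂ) - c) * ω y = ((deriv (deriv b) y : ℝ) : ℂ) * ψ y)

lemma deriv_nonneg_right (φ : ℝ → ℝ) (c d : ℝ) (hcd : c < d)
    (hdiff : DifferentiableAt ℝ φ c) (h0 : φ c = 0)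
    (hpos : ∀ x ∈ Set.Ioo c d, 0 ≤ φ x) : 0 ≤ deriv φ c := by
  have h := hdiff.hasDerivAt.hasDerivWithinAt (s := Set.Ioi c)
  rw [hasDerivWithinAt_iff_tendsto_slope,
    Set.diff_singleton_eq_self (by simp : c ∉ Set.Ioi c)] at h
  refine ge_of_tendsto h (Filter.eventually_of_mem
    (Ioo_mem_nhdsGT_of_mem ⟨le_refl c, hcd⟩) ?_)
  intro x hx
  rw [slope_def_field, h0, sub_zero]
  exact div_nonneg (hpos x hx) (by linarith [hx.1] : (0:ℝ) ≤ x - c)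

lemma deriv_nonpos_left (φ : ℝ → ℝ) (c d : ℝ) (hcd : c < d)
    (hdiff : DifferentiableAt ℝ φ d) (h0 : φ d = 0)
    (hpos : ∀ x ∈ Set.Ioo c d, 0 ≤ φ x) : deriv φ d ≤ 0 := by
  have h := hdiff.hasDerivAt.hasDerivWithinAt (s := Set.Iio d)
  rw [hasDerivWithinAt_iff_tendsto_slope,
    Set.diff_singleton_eq_self (by simp : d ∉ Set.Iio d)] at h
  refine le_of_tendsto h (Filter.eventually_of_mem
    (Ioo_mem_nhdsLT_of_mem ⟨hcd, le_refl d⟩) ?_)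
  intro x hx
  rw [slope_def_field, h0, sub_zero]
  exact div_nonpos_of_nonneg_of_nonpos (hpos x hx) (by linarith [hx.2] : x - d ≤ 0)

lemma master (b db b2 q : ℝ → ℝ) (k : ℝ) (hk : k ≠ 0)
    (hbd : ∀ y, HasDerivAt b (db y) y)
    (hdbd : ∀ y, HasDerivAt db (b2 y) y)
    (hb0 : b 0 = 0) (hb20 : b2 0 = 0)
    (hgrow : ∀ x : ℝ, 0 ≤ x → x ≤ b x)
    (hq : ∀ y : ℝ, y ≠ 0 → q y = b2 y / b y)
    (hqc : Continuous q)
    (y₀ : ℝ) (hy₀ : 0 ≤ y₀)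
    (φ : ℝ → ℝ) (hφ : ContDiff ℝ 2 φ)
    (hlim : Tendsto φ atTop (nhds 0))
    (heq : ∀ y, deriv (deriv φ) y - q y * φ y = k ^ 2 * φ y)
    (hzero : φ y₀ = 0) :
    ∀ y, φ y = 0 := by
  have hbdiff : Differentiable ℝ b := fun y => (hbd y).differentiableAt
  have hdbdiff : Differentiable ℝ db := fun y => (hdbd y).differentiableAt
  have hbpos : ∀ x : ℝ, 0 < x → 0 < b x := fun x hx => lt_of_lt_of_le hx (hgrow x hx.le)
  have hbne : ∀ x : ℝ, 0 < x → b x ≠ 0 := fun x hx => (hbpos x hx).ne'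
  have hk2 : 0 < k ^ 2 := lt_of_le_of_ne (sq_nonneg k) (Ne.symm (pow_ne_zero 2 hk))
  -- key: a solution ψ vanishing at y₀ cannot be positive to the right of y₀
  have key : ∀ ψ : ℝ → ℝ, ContDiff ℝ 2 ψ → Tendsto ψ atTop (nhds 0) →
      (∀ y, deriv (deriv ψ) y - q y * ψ y = k ^ 2 * ψ y) → ψ y₀ = 0 →
      ∀ x, y₀ < x → ¬ (0 < ψ x) := by
    intro ψ hψ hψlim hψeq hψ0 x₁ hx₁ hx₁pos
    have hψdiff : Differentiable ℝ ψ := hψ.differentiable (by norm_num)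
    have hψ'diff : Differentiable ℝ (deriv ψ) := by
      have h2 : ContDiff ℝ ((1:ℕ∞)+1) ψ := by exact_mod_cast hψ
      rw [contDiff_succ_iff_deriv] at h2
      exact h2.2.2.differentiable (by norm_num)
    have hψd : ∀ y, HasDerivAt ψ (deriv ψ y) y := fun y => (hψdiff y).hasDerivAt
    have hψdd : ∀ y, HasDerivAt (deriv ψ) (deriv (deriv ψ) y) y :=
      fun y => (hψ'diff y).hasDerivAt
    set V : ℝ → ℝ := fun y => deriv ψ y * b y - ψ y * db y with hVdef
    have hVd : ∀ y, HasDerivAt V (deriv (deriv ψ) y * b y - ψ y * b2 y) y := by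
      intro y
      have h := ((hψdd y).mul (hbd y)).sub ((hψd y).mul (hdbd y))
      exact h.congr_deriv (by ring)
    have hVval : ∀ y : ℝ, 0 ≤ y →
        deriv (deriv ψ) y * b y - ψ y * b2 y = k ^ 2 * b y * ψ y := by
      intro y hy
      rcases eq_or_ne y 0 with rfl | hy0
      · simp [hb0, hb20]
      · have hby : b y ≠ 0 := hbne y (lt_of_le_of_ne hy (Ne.symm hy0))
        have h1 := hψeq y
        rw [hq y hy0] at h1
        field_simp at h1
        nlinarith [h1]
    have hVcont : Continuous V :=
      ((hψ'diff.continuous.mul hbdiff.continuous).sub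
        (hψdiff.continuous.mul hdbdiff.continuous))
    -- the last zero before x₁
    set Z : Set ℝ := Set.Icc y₀ x₁ ∩ ψ ⁻¹' {0} with hZdef
    have hZc : IsClosed Z := isClosed_Icc.inter (isClosed_singleton.preimage hψdiff.continuous)
    have hZne : Z.Nonempty := ⟨y₀, ⟨le_refl _, hx₁.le⟩, hψ0⟩
    have hZbdd : BddAbove Z := (bddAbove_Icc (a := y₀) (b := x₁)).mono Set.inter_subset_left
    obtain ⟨⟨hy₀c, hcx₁⟩, hψc⟩ := hZc.csSup_mem hZne hZbdd
    set c := sSup Z with hcdef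
    have hψc : ψ c = 0 := hψc
    have hcx₁' : c < x₁ := lt_of_le_of_ne hcx₁ (by
      intro h; rw [h] at hψc; exact absurd hψc (ne_of_gt hx₁pos))
    have hc0 : (0:ℝ) ≤ c := le_trans hy₀ hy₀c
    -- ψ > 0 on (c, x₁]
    have hpos1 : ∀ x, c < x → x ≤ x₁ → 0 < ψ x := by
      intro x hcx hxx
      rcases lt_trichotomy (ψ x) 0 with hlt | heq0 | hgt
      · -- IVT gives a zero in (x, x₁)
        have hsub : Set.Ioo (ψ x) (ψ x₁) ⊆ ψ '' (Set.Ioo x x₁) :=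
          intermediate_value_Ioo hxx hψdiff.continuous.continuousOn
        obtain ⟨z, hz, hz0⟩ := hsub ⟨hlt, hx₁pos⟩
        have hzZ : z ∈ Z := ⟨⟨le_trans hy₀c (le_trans hcx.le hz.1.le), hz.2.le⟩, hz0⟩
        have : z ≤ c := le_csSup hZbdd hzZ
        linarith [hz.1]
      · exfalso
        have hxZ : x ∈ Z := ⟨⟨le_trans hy₀c hcx.le, hxx⟩, heq0⟩
        have : x ≤ c := le_csSup hZbdd hxZ
        linarith
      · exact hgt
    by_cases hD : ∃ x, x₁ < x ∧ ψ x = 0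
    · -- a further zero d, bump on (c,d)
      set D : Set ℝ := Set.Ici x₁ ∩ ψ ⁻¹' {0} with hDdef
      have hDc : IsClosed D := isClosed_Ici.inter (isClosed_singleton.preimage hψdiff.continuous)
      have hDne : D.Nonempty := by
        obtain ⟨x, hx, hx0⟩ := hD
        exact ⟨x, hx.le, hx0⟩
      have hDbdd : BddBelow D := (bddBelow_Ici (a := x₁)).mono Set.inter_subset_left
      obtain ⟨hx₁d, hψd0⟩ := hDc.csInf_mem hDne hDbdd
      set d := sInf D with hddef
      have hψd0 : ψ d = 0 := hψd0
      have hx₁d' : x₁ < d := lt_of_le_of_ne hx₁d (by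
        intro h; rw [← h] at hψd0; exact absurd hψd0 (ne_of_gt hx₁pos))
      have hcd : c < d := lt_trans hcx₁' hx₁d'
      -- ψ > 0 on (c,d)
      have hpos2 : ∀ x ∈ Set.Ioo c d, 0 < ψ x := by
        rintro x ⟨hcx, hxd⟩
        rcases le_or_gt x x₁ with hxx | hxx
        · exact hpos1 x hcx hxx
        · rcases lt_trichotomy (ψ x) 0 with hlt | heq0 | hgt
          · have hsub : Set.Ioo (ψ x) (ψ x₁) ⊆ ψ '' (Set.Ioo x₁ x) := by
              have := intermediate_value_Ioo' hxx.le hψdiff.continuous.continuousOn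
              simpa using this
            obtain ⟨z, hz, hz0⟩ := hsub ⟨hlt, hx₁pos⟩
            have : d ≤ z := csInf_le hDbdd ⟨hz.1.le, hz0⟩
            linarith [hz.2]
          · exfalso
            have : d ≤ x := csInf_le hDbdd ⟨hxx.le, heq0⟩
            linarith
          · exact hgt
      -- V is strictly increasing on [c,d]
      have hVmono : StrictMonoOn V (Set.Icc c d) := by
        apply strictMonoOn_of_deriv_pos (convex_Icc c d) hVcont.continuousOn
        intro x hx
        rw [interior_Icc] at hx
        have hx0 : 0 < x := lt_of_le_of_lt hc0 hx.1
        rw [(hVd x).deriv, hVval x hx0.le]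
        exact mul_pos (mul_pos hk2 (hbpos x hx0)) (hpos2 x hx)
      have h1 : V c < V d :=
        hVmono ⟨le_refl c, hcd.le⟩ ⟨hcd.le, le_refl d⟩ hcd
      have hψ'c : 0 ≤ deriv ψ c :=
        deriv_nonneg_right ψ c d hcd (hψdiff c) hψc (fun x hx => (hpos2 x hx).le)
      have hψ'd : deriv ψ d ≤ 0 :=
        deriv_nonpos_left ψ c d hcd (hψdiff d) hψd0 (fun x hx => (hpos2 x hx).le)
      have hbc : 0 ≤ b c := le_trans hc0 (hgrow c hc0)
      have hbd' : 0 < b d := hbpos d (lt_of_le_of_lt hc0 hcd)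
      have hVc : 0 ≤ V c := by
        simp only [hVdef, hψc, zero_mul, sub_zero]
        exact mul_nonneg hψ'c hbc
      have hVd0 : V d ≤ 0 := by
        simp only [hVdef, hψd0, zero_mul, sub_zero]
        exact mul_nonpos_of_nonpos_of_nonneg hψ'd hbd'.le
      linarith
    · -- no zero beyond x₁ : ψ > 0 on (c,∞), contradiction with decay
      push_neg at hD
      have hpos3 : ∀ x, c < x → 0 < ψ x := by
        intro x hcx
        rcases le_or_gt x x₁ with hxx | hxx
        · exact hpos1 x hcx hxx
        · rcases lt_trichotomy (ψ x) 0 with hlt | heq0 | hgt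
          · have hsub : Set.Ioo (ψ x) (ψ x₁) ⊆ ψ '' (Set.Ioo x₁ x) := by
              have := intermediate_value_Ioo' hxx.le hψdiff.continuous.continuousOn
              simpa using this
            obtain ⟨z, hz, hz0⟩ := hsub ⟨hlt, hx₁pos⟩
            exact absurd hz0 (hD z hz.1)
          · exact absurd heq0 (hD x hxx)
          · exact hgt
      have hVmono : StrictMonoOn V (Set.Ici c) := by
        apply strictMonoOn_of_deriv_pos (convex_Ici c) hVcont.continuousOn
        intro x hx
        rw [interior_Ici] at hx
        have hx0 : 0 < x := lt_of_le_of_lt hc0 hx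
        rw [(hVd x).deriv, hVval x hx0.le]
        exact mul_pos (mul_pos hk2 (hbpos x hx0)) (hpos3 x hx)
      have hψ'c : 0 ≤ deriv ψ c :=
        deriv_nonneg_right ψ c (c+1) (by linarith) (hψdiff c) hψc
          (fun x hx => (hpos3 x hx.1).le)
      have hbc : 0 ≤ b c := le_trans hc0 (hgrow c hc0)
      have hVc : 0 ≤ V c := by
        simp only [hVdef, hψc, zero_mul, sub_zero]
        exact mul_nonneg hψ'c hbc
      have hVpos : ∀ x, c < x → 0 < V x := fun x hx =>
        lt_of_le_of_lt hVc (hVmono (Set.self_mem_Ici) (Set.mem_Ici.mpr hx.le) hx)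
      -- w = ψ/b is monotone on [c+1, ∞)
      have hbc1 : 0 < b (c+1) := hbpos _ (by linarith)
      set ε : ℝ := ψ (c+1) / b (c+1) with hεdef
      have hε : 0 < ε := div_pos (hpos3 _ (by linarith)) hbc1
      have hwd : ∀ x : ℝ, 0 < x → HasDerivAt (fun x => ψ x / b x)
          ((deriv ψ x * b x - ψ x * db x) / (b x) ^ 2) x := by
        intro x hx
        exact (hψd x).div (hbd x) (hbne x hx)
      have hwmono : MonotoneOn (fun x => ψ x / b x) (Set.Ici (c+1)) := by
        apply monotoneOn_of_deriv_nonneg (convex_Ici (c+1))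
        · apply continuousOn_of_forall_continuousAt
          intro x hx
          exact (hwd x (by linarith [Set.mem_Ici.mp hx])).continuousAt
        · intro x hx
          rw [interior_Ici] at hx
          exact ((hwd x (by linarith [Set.mem_Ioi.mp hx])).differentiableAt).differentiableWithinAt
        · intro x hx
          rw [interior_Ici] at hx
          have hx0 : 0 < x := by linarith [Set.mem_Ioi.mp hx]
          rw [(hwd x hx0).deriv]
          exact div_nonneg (hVpos x (by linarith [Set.mem_Ioi.mp hx])).le (sq_nonneg _)
      have hlower : ∀ x, c+1 ≤ x → ε * (c+1) ≤ ψ x := by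
        intro x hx
        have hx0 : 0 < x := by linarith
        have hw := hwmono (Set.self_mem_Ici) (Set.mem_Ici.mpr hx) hx
        have h2 : ε * b x ≤ ψ x := by
          have hw' : ε ≤ ψ x / b x := hw
          exact (le_div_iff₀ (hbpos x hx0)).mp hw'
        calc ε * (c+1) ≤ ε * x := by nlinarith
          _ ≤ ε * b x := by nlinarith [hgrow x hx0.le]
          _ ≤ ψ x := h2
      have hev1 : ∀ᶠ x in atTop, ψ x < ε * (c+1) :=
        hψlim.eventually (eventually_lt_nhds (by positivity))
      have hev2 : ∀ᶠ x : ℝ in atTop, c+1 ≤ x := eventually_ge_atTop (c+1)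
      obtain ⟨x, hx1, hx2⟩ := (hev1.and hev2).exists
      linarith [hlower x hx2]
  -- φ vanishes on [y₀, ∞)
  have hφdiff : Differentiable ℝ φ := hφ.differentiable (by norm_num)
  have hφ'diff : Differentiable ℝ (deriv φ) := by
    have h2 : ContDiff ℝ ((1:ℕ∞)+1) φ := by exact_mod_cast hφ
    rw [contDiff_succ_iff_deriv] at h2
    exact h2.2.2.differentiable (by norm_num)
  have hneg_eq : ∀ y, deriv (deriv (fun z => -φ z)) y - q y * (-φ y) = k ^ 2 * (-φ y) := by
    intro y
    have e1 : deriv (fun z => -φ z) = fun z => -deriv φ z := funext fun z => deriv.neg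
    rw [e1]
    have e2 : deriv (fun z => -deriv φ z) y = -deriv (deriv φ) y := deriv.neg
    rw [e2]
    linarith [heq y]
  have hzright : ∀ x, y₀ ≤ x → φ x = 0 := by
    intro x hx
    rcases eq_or_lt_of_le hx with rfl | hlt
    · exact hzero
    · have h1 := key φ hφ hlim heq hzero x hlt
      have h2 := key (fun z => -φ z) hφ.neg (by simpa using hlim.neg) hneg_eq
        (by simp [hzero]) x hlt
      push_neg at h1 h2
      have h2' : -φ x ≤ 0 := h2
      linarith
  -- extend to the left by ODE uniqueness
  intro y
  rcases le_or_gt y₀ y with h | h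
  · exact hzright y h
  · set Y : ℝ := y₀ + 1 with hYdef
    have hφY : φ Y = 0 := hzright Y (by linarith)
    have hφ'Y : deriv φ Y = 0 := by
      have hev : φ =ᶠ[nhds Y] (fun _ => (0:ℝ)) := by
        refine Filter.eventually_of_mem (Ioi_mem_nhds (show y₀ < Y by linarith)) ?_
        intro z hz
        exact hzright z (le_of_lt hz)
      rw [hev.deriv_eq]
      simp
    -- bound the coefficient on [y, Y]
    set g : ℝ → ℝ := fun s => q s + k ^ 2 with hgdef
    have hgc : Continuous g := hqc.add continuous_const
    obtain ⟨C, hC⟩ := (isCompact_Icc (a := y) (b := Y)).exists_bound_of_continuousOn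
      hgc.continuousOn
    have hC1 : (0:ℝ) ≤ max 1 C := le_trans zero_le_one (le_max_left _ _)
    set proj : ℝ → ℝ := fun s => max y (min s Y) with hprojdef
    have hyY : y ≤ Y := by linarith
    have hprojmem : ∀ s, proj s ∈ Set.Icc y Y :=
      fun s => ⟨le_max_left _ _, max_le hyY (min_le_right _ _)⟩
    set v : ℝ → (ℝ × ℝ) → (ℝ × ℝ) := fun s u => (u.2, g (proj s) * u.1) with hvdef
    have hvlip : ∀ s, LipschitzWith (Real.toNNReal (max 1 C)) (v s) := by
      intro s
      have hgs : |g (proj s)| ≤ max 1 C := by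
        have := hC _ (hprojmem s)
        rw [Real.norm_eq_abs] at this
        exact le_trans this (le_max_right _ _)
      apply LipschitzWith.of_dist_le_mul
      intro u w
      rw [Prod.dist_eq, Prod.dist_eq, Real.coe_toNNReal _ hC1]
      have hd1 : dist u.2 w.2 ≤ max 1 C * max (dist u.1 w.1) (dist u.2 w.2) := by
        nlinarith [le_max_right (dist u.1 w.1) (dist u.2 w.2), dist_nonneg (x := u.2) (y := w.2),
          le_max_left (1:ℝ) C, dist_nonneg (x := u.1) (y := w.1)]
      have hd2 : dist (g (proj s) * u.1) (g (proj s) * w.1) ≤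
          max 1 C * max (dist u.1 w.1) (dist u.2 w.2) := by
        rw [Real.dist_eq, ← mul_sub, abs_mul]
        calc |g (proj s)| * |u.1 - w.1| ≤ max 1 C * |u.1 - w.1| :=
              mul_le_mul_of_nonneg_right hgs (abs_nonneg _)
          _ ≤ max 1 C * max (dist u.1 w.1) (dist u.2 w.2) := by
              apply mul_le_mul_of_nonneg_left _ hC1
              rw [Real.dist_eq]
              exact le_max_left _ _
      exact max_le hd1 hd2
    set F : ℝ → ℝ × ℝ := fun s => (φ s, deriv φ s) with hFdef
    have hF' : ∀ s ∈ Set.Ioc y Y, HasDerivWithinAt F (v s (F s)) (Set.Iic s) s := by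
      intro s hs
      have h1 : HasDerivAt F (deriv φ s, deriv (deriv φ) s) s :=
        (hφdiff s).hasDerivAt.prodMk (hφ'diff s).hasDerivAt
      have h2 : v s (F s) = (deriv φ s, deriv (deriv φ) s) := by
        have hproj : proj s = s := by
          simp only [hprojdef]
          rw [min_eq_left hs.2, max_eq_right hs.1.le]
        simp only [hvdef, hFdef, hproj]
        have := heq s
        have : g s * φ s = deriv (deriv φ) s := by
          simp only [hgdef]; linarith [heq s]
        rw [this]
      rw [h2]
      exact h1.hasDerivWithinAt
    have hFcont : ContinuousOn F (Set.Icc y Y) :=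
      (hφdiff.continuous.prodMk hφ'diff.continuous).continuousOn
    have hG' : ∀ s ∈ Set.Ioc y Y, HasDerivWithinAt (fun _ : ℝ => ((0:ℝ), (0:ℝ)))
        (v s ((0:ℝ), (0:ℝ))) (Set.Iic s) s := by
      intro s hs
      have : v s ((0:ℝ), (0:ℝ)) = ((0:ℝ), (0:ℝ)) := by simp [hvdef]
      rw [this]
      exact hasDerivWithinAt_const s _ _
    have huniq := ODE_solution_unique_of_mem_Icc_left (s := fun _ => Set.univ)
      (fun t _ => show LipschitzOnWith _ (v t) Set.univ from (hvlip t).lipschitzOnWith)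
      hFcont hF' (fun _ _ => trivial)
      continuousOn_const hG' (fun _ _ => trivial)
      (by simp [hFdef, hφY, hφ'Y])
    have h3 := huniq (Set.mem_Icc.mpr ⟨le_refl y, hyY⟩)
    have h4 : (φ y, deriv φ y) = ((0:ℝ), (0:ℝ)) := h3
    exact (Prod.ext_iff.mp h4).1

def shearB1 (ν M γ₀ γ₁ γ₂ t : ℝ) : ℝ → ℝ := fun y =>
  1 + M * (γ₀^2 / Real.sqrt (4*ν*t + γ₀^2) * Real.exp (-y^2 / (4*ν*t + γ₀^2))
    - γ₂ * (γ₀^2 * γ₁^3 / Real.sqrt (4*ν*t + γ₀^2*γ₁^2) * Real.exp (-y^2 / (4*ν*t + γ₀^2*γ₁^2))))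

def shearB2 (ν M γ₀ γ₁ γ₂ t : ℝ) : ℝ → ℝ := fun y =>
  M * (γ₀^2 / Real.sqrt (4*ν*t + γ₀^2) *
        (Real.exp (-y^2 / (4*ν*t + γ₀^2)) * (-(2*y) / (4*ν*t + γ₀^2)))
    - γ₂ * (γ₀^2 * γ₁^3 / Real.sqrt (4*ν*t + γ₀^2*γ₁^2) *
        (Real.exp (-y^2 / (4*ν*t + γ₀^2*γ₁^2)) * (-(2*y) / (4*ν*t + γ₀^2*γ₁^2)))))

lemma expint_hasDerivAt (c A : ℝ) (y : ℝ) :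
    HasDerivAt (fun u => ∫ z in (0:ℝ)..u, c * Real.exp (-z^2 / A))
      (c * Real.exp (-y^2 / A)) y := by
  have hf : Continuous (fun z : ℝ => c * Real.exp (-z^2 / A)) := by fun_prop
  exact intervalIntegral.integral_hasDerivAt_right (hf.intervalIntegrable _ _)
    (hf.stronglyMeasurableAtFilter _ _) hf.continuousAt

lemma exp_sq_hasDerivAt (A : ℝ) (y : ℝ) :
    HasDerivAt (fun u : ℝ => Real.exp (-u^2 / A))
      (Real.exp (-y^2 / A) * (-(2*y) / A)) y := by
  have h1 : HasDerivAt (fun u : ℝ => -u^2 / A) (-(2*y) / A) y := by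
    have h0 : HasDerivAt (fun u : ℝ => u^2) (2*y) y := by simpa using hasDerivAt_pow 2 y
    exact h0.neg.div_const A
  exact h1.exp

lemma shear_hasDerivAt (ν M γ₀ γ₁ γ₂ t : ℝ) (y : ℝ) :
    HasDerivAt (shearFlow ν M γ₀ γ₁ γ₂ t) (shearB1 ν M γ₀ γ₁ γ₂ t y) y := by
  have h1 := expint_hasDerivAt (γ₀^2 / Real.sqrt (4*ν*t + γ₀^2)) (4*ν*t + γ₀^2) y
  have h2 := expint_hasDerivAt (γ₀^2 * γ₁^3 / Real.sqrt (4*ν*t + γ₀^2*γ₁^2))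
    (4*ν*t + γ₀^2*γ₁^2) y
  have h := (hasDerivAt_id y).add (((h1.sub (h2.const_mul γ₂)).const_mul M))
  convert h using 1
  all_goals rfl

lemma shearB1_hasDerivAt (ν M γ₀ γ₁ γ₂ t : ℝ) (y : ℝ) :
    HasDerivAt (shearB1 ν M γ₀ γ₁ γ₂ t) (shearB2 ν M γ₀ γ₁ γ₂ t y) y := by
  have h1 := (exp_sq_hasDerivAt (4*ν*t + γ₀^2) y).const_mul (γ₀^2 / Real.sqrt (4*ν*t + γ₀^2))
  have h2 := (exp_sq_hasDerivAt (4*ν*t + γ₀^2*γ₁^2) y).const_mul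
    (γ₀^2 * γ₁^3 / Real.sqrt (4*ν*t + γ₀^2*γ₁^2))
  have h := ((hasDerivAt_const y (1:ℝ)).add ((h1.sub (h2.const_mul γ₂)).const_mul M))
  exact h.congr_deriv (by simp only [shearB2]; ring)

lemma shearFlow_zero (ν M γ₀ γ₁ γ₂ t : ℝ) : shearFlow ν M γ₀ γ₁ γ₂ t 0 = 0 := by
  simp [shearFlow]

lemma shearB2_zero (ν M γ₀ γ₁ γ₂ t : ℝ) : shearB2 ν M γ₀ γ₁ γ₂ t 0 = 0 := by
  simp [shearB2]

lemma shearB1_ge_one (ν M γ₀ γ₁ γ₂ t : ℝ) (hν : 0 < ν) (hM : 0 < M)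
    (hγ₀ : γ₀ ∈ Set.Ioo (0:ℝ) 1) (hγ₁ : γ₁ ∈ Set.Ioo (0:ℝ) 1)
    (hγ₂ : γ₂ ∈ Set.Ioo (0:ℝ) 1) (ht : 0 ≤ t) (y : ℝ) :
    1 ≤ shearB1 ν M γ₀ γ₁ γ₂ t y := by
  obtain ⟨hγ₀0, hγ₀1⟩ := hγ₀
  obtain ⟨hγ₁0, hγ₁1⟩ := hγ₁
  obtain ⟨hγ₂0, hγ₂1⟩ := hγ₂
  have hA₁ : (0:ℝ) < 4*ν*t + γ₀^2 := by positivity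
  have hA₂ : (0:ℝ) < 4*ν*t + γ₀^2*γ₁^2 := by positivity
  have hs₁ : (0:ℝ) < Real.sqrt (4*ν*t + γ₀^2) := Real.sqrt_pos.mpr hA₁
  have hs₂ : (0:ℝ) < Real.sqrt (4*ν*t + γ₀^2*γ₁^2) := Real.sqrt_pos.mpr hA₂
  have hγ₁sq : γ₁^2 ≤ 1 := by nlinarith
  have hAle : 4*ν*t + γ₀^2*γ₁^2 ≤ 4*ν*t + γ₀^2 := by nlinarith [sq_nonneg γ₀]
  -- exp comparison
  have hee : Real.exp (-y^2 / (4*ν*t + γ₀^2*γ₁^2)) ≤ Real.exp (-y^2 / (4*ν*t + γ₀^2)) := by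
    apply Real.exp_le_exp.mpr
    rw [neg_div, neg_div, neg_le_neg_iff]
    exact div_le_div_of_nonneg_left (sq_nonneg y) hA₂ hAle
  -- sqrt comparison
  have h3 : γ₁^3 * Real.sqrt (4*ν*t + γ₀^2) ≤ Real.sqrt (4*ν*t + γ₀^2*γ₁^2) := by
    have e1 : γ₁^3 * Real.sqrt (4*ν*t + γ₀^2) = Real.sqrt (γ₁^6 * (4*ν*t + γ₀^2)) := by
      rw [Real.sqrt_mul (by positivity) _]
      congr 1
      have : γ₁^6 = (γ₁^3)^2 := by ring
      rw [this, Real.sqrt_sq (by positivity)]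
    rw [e1]
    apply Real.sqrt_le_sqrt
    have hνt : (0:ℝ) ≤ 4 * (ν * t) := by positivity
    have h61 : γ₁^6 ≤ 1 := pow_le_one₀ hγ₁0.le hγ₁1.le
    have h62 : γ₁^6 ≤ γ₁^2 := pow_le_pow_of_le_one hγ₁0.le hγ₁1.le (by norm_num)
    have hm1 : γ₁^6 * (4*(ν*t)) ≤ 1 * (4*(ν*t)) := mul_le_mul_of_nonneg_right h61 hνt
    have hm2 : γ₀^2 * γ₁^6 ≤ γ₀^2 * γ₁^2 := mul_le_mul_of_nonneg_left h62 (sq_nonneg γ₀)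
    nlinarith [hm1, hm2]
  -- coefficient comparison
  have hcoef : γ₂ * (γ₀^2 * γ₁^3) / Real.sqrt (4*ν*t + γ₀^2*γ₁^2) ≤
      γ₀^2 / Real.sqrt (4*ν*t + γ₀^2) := by
    rw [div_le_div_iff₀ hs₂ hs₁]
    have h4 : γ₀^2 * (γ₁^3 * Real.sqrt (4*ν*t + γ₀^2)) ≤
        γ₀^2 * Real.sqrt (4*ν*t + γ₀^2*γ₁^2) := mul_le_mul_of_nonneg_left h3 (sq_nonneg γ₀)
    have h5 : γ₂ * (γ₀^2 * γ₁^3 * Real.sqrt (4*ν*t + γ₀^2)) ≤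
        1 * (γ₀^2 * γ₁^3 * Real.sqrt (4*ν*t + γ₀^2)) :=
      mul_le_mul_of_nonneg_right hγ₂1.le (by positivity)
    nlinarith [h4, h5]
  -- final assembly
  have he₂pos : (0:ℝ) < Real.exp (-y^2 / (4*ν*t + γ₀^2*γ₁^2)) := Real.exp_pos _
  have h6 : γ₂ * (γ₀^2 * γ₁^3) / Real.sqrt (4*ν*t + γ₀^2*γ₁^2) *
        Real.exp (-y^2 / (4*ν*t + γ₀^2*γ₁^2)) ≤
      γ₀^2 / Real.sqrt (4*ν*t + γ₀^2) * Real.exp (-y^2 / (4*ν*t + γ₀^2)) :=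
    mul_le_mul hcoef hee he₂pos.le (by positivity)
  have h7 : 0 ≤ γ₀^2 / Real.sqrt (4*ν*t + γ₀^2) * Real.exp (-y^2 / (4*ν*t + γ₀^2))
      - γ₂ * (γ₀^2 * γ₁^3 / Real.sqrt (4*ν*t + γ₀^2*γ₁^2) *
        Real.exp (-y^2 / (4*ν*t + γ₀^2*γ₁^2))) := by
    ring_nf at h6 ⊢
    linarith [h6]
  have h8 := mul_nonneg hM.le h7
  simp only [shearB1]
  nlinarith [h8]

lemma shear_deriv (ν M γ₀ γ₁ γ₂ t : ℝ) :
    deriv (shearFlow ν M γ₀ γ₁ γ₂ t) = shearB1 ν M γ₀ γ₁ γ₂ t :=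
  funext fun y => (shear_hasDerivAt ν M γ₀ γ₁ γ₂ t y).deriv

lemma shear_deriv2 (ν M γ₀ γ₁ γ₂ t : ℝ) :
    deriv (deriv (shearFlow ν M γ₀ γ₁ γ₂ t)) = shearB2 ν M γ₀ γ₁ γ₂ t := by
  rw [shear_deriv]
  exact funext fun y => (shearB1_hasDerivAt ν M γ₀ γ₁ γ₂ t y).deriv

lemma shearB2_continuous (ν M γ₀ γ₁ γ₂ t : ℝ) : Continuous (shearB2 ν M γ₀ γ₁ γ₂ t) := by
  unfold shearB2
  fun_prop

lemma shear_grow (ν M γ₀ γ₁ γ₂ t : ℝ) (hν : 0 < ν) (hM : 0 < M)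
    (hγ₀ : γ₀ ∈ Set.Ioo (0:ℝ) 1) (hγ₁ : γ₁ ∈ Set.Ioo (0:ℝ) 1)
    (hγ₂ : γ₂ ∈ Set.Ioo (0:ℝ) 1) (ht : 0 ≤ t) :
    (∀ x : ℝ, 0 ≤ x → x ≤ shearFlow ν M γ₀ γ₁ γ₂ t x) ∧
    (∀ x : ℝ, x ≤ 0 → shearFlow ν M γ₀ γ₁ γ₂ t x ≤ x) := by
  have hg : ∀ y, HasDerivAt (fun x => shearFlow ν M γ₀ γ₁ γ₂ t x - x)
      (shearB1 ν M γ₀ γ₁ γ₂ t y - 1) y :=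
    fun y => (shear_hasDerivAt ν M γ₀ γ₁ γ₂ t y).sub (hasDerivAt_id y)
  have hmono : Monotone (fun x => shearFlow ν M γ₀ γ₁ γ₂ t x - x) := by
    apply monotone_of_deriv_nonneg (fun y => (hg y).differentiableAt)
    intro y
    rw [(hg y).deriv]
    linarith [shearB1_ge_one ν M γ₀ γ₁ γ₂ t hν hM hγ₀ hγ₁ hγ₂ ht y]
  constructor
  · intro x hx
    have := hmono hx
    simp only [shearFlow_zero, zero_sub, sub_zero, neg_zero] at this
    linarith [this]
  · intro x hx
    have := hmono hx
    simp only [shearFlow_zero, zero_sub, sub_zero, neg_zero] at this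
    linarith [this]

/-- no-zeros part of Lemma 2.1.
Fix parameters and let `b = b(t,·)` be the shear flow at time `t`, and let `q` be the
continuous extension of `b''/b`. If `φ` is a `C²` solution of `φ'' − q·φ = k²·φ`
(`k ≠ 0`) with `φ, φ' ∈ L²` and `φ(y) → 0` as `y → ±∞`, and `φ(y₀) = 0` for some `y₀`,
then `φ ≡ 0`. -/
theorem neutral_mode_no_zeros (ν M γ₀ γ₁ γ₂ t : ℝ) (hν : 0 < ν) (hM : 0 < M)
    (hγ₀ : γ₀ ∈ Set.Ioo (0:ℝ) 1) (hγ₁ : γ₁ ∈ Set.Ioo (0:ℝ) 1)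
    (hγ₂ : γ₂ ∈ Set.Ioo (0:ℝ) 1) (ht : 0 ≤ t)
    (q : ℝ → ℝ) (hq0 : ContinuousAt q 0)
    (hq : ∀ y : ℝ, y ≠ 0 →
      q y = deriv (deriv (shearFlow ν M γ₀ γ₁ γ₂ t)) y / shearFlow ν M γ₀ γ₁ γ₂ t y)
    (k : ℝ) (hk : k ≠ 0)
    (φ : ℝ → ℝ) (hφ : ContDiff ℝ 2 φ)
    (hφL2 : MemLp φ 2 (volume : Measure ℝ))
    (hφ'L2 : MemLp (deriv φ) 2 (volume : Measure ℝ))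
    (hlim_top : Tendsto φ atTop (nhds 0)) (hlim_bot : Tendsto φ atBot (nhds 0))
    (heq : ∀ y : ℝ, deriv (deriv φ) y - q y * φ y = k^2 * φ y)
    (y₀ : ℝ) (hzero : φ y₀ = 0) :
    ∀ y : ℝ, φ y = 0 := by
  have hgrow := shear_grow ν M γ₀ γ₁ γ₂ t hν hM hγ₀ hγ₁ hγ₂ ht
  set b := shearFlow ν M γ₀ γ₁ γ₂ t with hbdef
  have hd2 : deriv (deriv b) = shearB2 ν M γ₀ γ₁ γ₂ t := shear_deriv2 ν M γ₀ γ₁ γ₂ t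
  have hbd : ∀ y, HasDerivAt b (shearB1 ν M γ₀ γ₁ γ₂ t y) y := shear_hasDerivAt ν M γ₀ γ₁ γ₂ t
  have hdbd : ∀ y, HasDerivAt (shearB1 ν M γ₀ γ₁ γ₂ t) (shearB2 ν M γ₀ γ₁ γ₂ t y) y :=
    shearB1_hasDerivAt ν M γ₀ γ₁ γ₂ t
  have hb0 : b 0 = 0 := shearFlow_zero ν M γ₀ γ₁ γ₂ t
  have hb20 : shearB2 ν M γ₀ γ₁ γ₂ t 0 = 0 := shearB2_zero ν M γ₀ γ₁ γ₂ t
  have hbne : ∀ y : ℝ, y ≠ 0 → b y ≠ 0 := by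
    intro y hy
    rcases lt_or_gt_of_ne hy with h | h
    · exact (lt_of_le_of_lt (hgrow.2 y h.le) h).ne
    · exact (lt_of_lt_of_le h (hgrow.1 y h.le)).ne'
  have hq' : ∀ y : ℝ, y ≠ 0 → q y = shearB2 ν M γ₀ γ₁ γ₂ t y / b y := by
    intro y hy
    rw [hq y hy, hd2]
  have hqcont : Continuous q := by
    rw [continuous_iff_continuousAt]
    intro y
    rcases eq_or_ne y 0 with rfl | hy
    · exact hq0
    · have hcongr : q =ᶠ[nhds y] (fun z => shearB2 ν M γ₀ γ₁ γ₂ t z / b z) := by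
        filter_upwards [isOpen_compl_singleton.mem_nhds hy] with z hz
        exact hq' z hz
      have hca : ContinuousAt (fun z => shearB2 ν M γ₀ γ₁ γ₂ t z / b z) y :=
        ((shearB2_continuous ν M γ₀ γ₁ γ₂ t).continuousAt).div
          ((hbd y).differentiableAt.continuousAt) (hbne y hy)
      exact hca.congr hcongr.symm
  rcases le_or_gt 0 y₀ with hy₀ | hy₀
  · exact master b _ _ q k hk hbd hdbd hb0 hb20 hgrow.1 hq' hqcont y₀ hy₀ φ hφ
      hlim_top heq hzero
  · -- reflect the problem
    set bb : ℝ → ℝ := fun y => -b (-y) with hbbdef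
    set ddb : ℝ → ℝ := fun y => shearB1 ν M γ₀ γ₁ γ₂ t (-y) with hddbdef
    set bb2 : ℝ → ℝ := fun y => -shearB2 ν M γ₀ γ₁ γ₂ t (-y) with hbb2def
    set qq : ℝ → ℝ := fun y => q (-y) with hqqdef
    set φφ : ℝ → ℝ := fun y => φ (-y) with hφφdef
    have hbbd : ∀ y, HasDerivAt bb (ddb y) y := by
      intro y
      have h := ((hbd (-y)).comp y (hasDerivAt_neg y)).neg
      have h2 : HasDerivAt (fun z => -b (-z)) (-(shearB1 ν M γ₀ γ₁ γ₂ t (-y) * (-1))) y := by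
        exact h
      convert h2 using 1
      try ring
    have hddbd : ∀ y, HasDerivAt ddb (bb2 y) y := by
      intro y
      have h := (hdbd (-y)).comp y (hasDerivAt_neg y)
      have h2 : HasDerivAt (fun z => shearB1 ν M γ₀ γ₁ γ₂ t (-z))
          (shearB2 ν M γ₀ γ₁ γ₂ t (-y) * (-1)) y := by
        exact h
      convert h2 using 1
      try simp [hbb2def]
      try ring
    have hbb0 : bb 0 = 0 := by simp [hbbdef, hb0]
    have hbb20 : bb2 0 = 0 := by simp [hbb2def, hb20]
    have hbbgrow : ∀ x : ℝ, 0 ≤ x → x ≤ bb x := by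
      intro x hx
      have := hgrow.2 (-x) (by linarith)
      simp only [hbbdef]
      linarith
    have hqq : ∀ y : ℝ, y ≠ 0 → qq y = bb2 y / bb y := by
      intro y hy
      have h := hq' (-y) (neg_ne_zero.mpr hy)
      simp only [hqqdef, hbb2def, hbbdef, neg_div_neg_eq]
      exact h
    have hqqc : Continuous qq := hqcont.comp continuous_neg
    have hφφ : ContDiff ℝ 2 φφ := hφ.comp (contDiff_id.neg)
    have hφφlim : Tendsto φφ atTop (nhds 0) := hlim_bot.comp tendsto_neg_atTop_atBot
    have hφφ0 : φφ (-y₀) = 0 := by simp [hφφdef, hzero]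
    have hd1 : deriv φφ = fun y => -deriv φ (-y) := funext fun y => deriv_comp_neg φ y
    have hdd : ∀ y, deriv (deriv φφ) y = deriv (deriv φ) (-y) := by
      intro y
      rw [hd1]
      have e1 : deriv (fun z => -deriv φ (-z)) y = -deriv (fun z => deriv φ (-z)) y := deriv.neg
      rw [e1, deriv_comp_neg, neg_neg]
    have hφφeq : ∀ y, deriv (deriv φφ) y - qq y * φφ y = k ^ 2 * φφ y := by
      intro y
      rw [hdd y]
      exact heq (-y)
    intro y
    have h := master bb ddb bb2 qq k hk hbbd hddbd hbb0 hbb20 hbbgrow hqq hqqc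
      (-y₀) (by linarith) φφ hφφ hφφlim hφφeq hφφ0 (-y)
    simpa [hφφdef] using h
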